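/- For n ≥ 4, the set of dominant vertices of the order super commuting graph Δ^o(S_n) of the symmetric group S_n is exactly {e}; that is, a permutation σ ∈ S_n is a dominant vertex of Δ^o(S_n) if and only if σ is the identity. -/

import Mathlib

/-- The power graph of a group `G`: distinct `x, y` are adjacent iff one is a power
of the other, i.e. `x ∈ ⟨y⟩` or `y ∈ ⟨x⟩`. -/
def powerGraph (G : Type*) [Group G] : SimpleGraph G :=
  SimpleGraph.fromRel (fun x y => x ∈ Subgroup.zpowers y)

/-- The enhanced power graph of a group `G`: distinct `x, y` are adjacent iff they lie
in a common cyclic subgroup. -/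
def enhancedPowerGraph (G : Type*) [Group G] : SimpleGraph G :=
  SimpleGraph.fromRel
    (fun x y => ∃ z : G, x ∈ Subgroup.zpowers z ∧ y ∈ Subgroup.zpowers z)

/-- The commuting graph of a group `G`: distinct `x, y` are adjacent iff they commute. -/
def commutingGraph (G : Type*) [Group G] : SimpleGraph G :=
  SimpleGraph.fromRel (fun x y => x * y = y * x)

/-- The order super graph of a graph `A` on a group `G`: distinct `x, y` are adjacent iff
they have the same order, or some elements of the same orders are adjacent in `A`. -/
def orderSuper (G : Type*) [Group G] (A : SimpleGraph G) : SimpleGraph G :=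
  SimpleGraph.fromRel (fun x y =>
    orderOf x = orderOf y ∨
      ∃ x' y' : G, orderOf x' = orderOf x ∧ orderOf y' = orderOf y ∧ A.Adj x' y')

/-- The conjugacy super graph of a graph `A` on a group `G`: distinct `x, y` are adjacent
iff they are conjugate, or some conjugates of them are adjacent in `A`. -/
def conjSuper (G : Type*) [Group G] (A : SimpleGraph G) : SimpleGraph G :=
  SimpleGraph.fromRel (fun x y =>
    IsConj x y ∨ ∃ x' y' : G, IsConj x x' ∧ IsConj y y' ∧ A.Adj x' y')

/-- A vertex of a simple graph is dominant if it is adjacent to every other vertex. -/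
def IsDominantVertex {V : Type*} (Γ : SimpleGraph V) (v : V) : Prop :=
  ∀ w, w ≠ v → Γ.Adj v w


/-- Sum of the maximal prime powers dividing `k`. -/
def ppf (k : ℕ) : ℕ := ∑ p ∈ k.primeFactors, p ^ k.factorization p

lemma ppf_one : ppf 1 = 0 := by simp [ppf]

lemma sum_le_prod_nat (s : Finset ℕ) (g : ℕ → ℕ) (h : ∀ p ∈ s, 2 ≤ g p) :
    ∑ p ∈ s, g p ≤ ∏ p ∈ s, g p := by
  induction s using Finset.induction_on with
  | empty => simp
  | @insert a s ha ih =>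
    rw [Finset.sum_insert ha, Finset.prod_insert ha]
    rcases s.eq_empty_or_nonempty with rfl | hne
    · simp
    · have h2 : 2 ≤ g a := h a (Finset.mem_insert_self a s)
      have hs : ∀ p ∈ s, 2 ≤ g p := fun p hp => h p (Finset.mem_insert_of_mem hp)
      have hP : 2 ≤ ∏ p ∈ s, g p := by
        obtain ⟨b, hb⟩ := hne
        calc 2 ≤ g b := hs b hb
        _ ≤ ∏ p ∈ s, g p := Finset.single_le_prod' (fun p hp => le_trans one_le_two (hs p hp)) hb
      have := ih hs
      nlinarith
  
lemma ppf_le_self {k : ℕ} (hk : k ≠ 0) : ppf k ≤ k := by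
  have h1 : ∑ p ∈ k.primeFactors, p ^ k.factorization p ≤
      ∏ p ∈ k.primeFactors, p ^ k.factorization p := by
    apply sum_le_prod_nat
    intro p hp
    have hp2 : 2 ≤ p := (Nat.prime_of_mem_primeFactors hp).two_le
    have hv : 1 ≤ k.factorization p := (Nat.Prime.factorization_pos_of_dvd
      (Nat.prime_of_mem_primeFactors hp) hk (Nat.dvd_of_mem_primeFactors hp))
    calc 2 ≤ p := hp2
    _ = p ^ 1 := (pow_one p).symm
    _ ≤ p ^ k.factorization p := Nat.pow_le_pow_right (by omega) hv
  have h2 : ∏ p ∈ k.primeFactors, p ^ k.factorization p = k := by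
    simpa [Finsupp.prod] using Nat.factorization_prod_pow_eq_self hk
  calc ppf k ≤ ∏ p ∈ k.primeFactors, p ^ k.factorization p := h1
  _ = k := h2

lemma ppf_lcm_le {a b : ℕ} (ha : a ≠ 0) (hb : b ≠ 0) :
    ppf (Nat.lcm a b) ≤ ppf a + ppf b := by
  have hl : Nat.lcm a b ≠ 0 := Nat.lcm_ne_zero ha hb
  have hfac : (Nat.lcm a b).factorization = a.factorization ⊔ b.factorization :=
    Nat.factorization_lcm ha hb
  have hsupp : (Nat.lcm a b).primeFactors = a.primeFactors ∪ b.primeFactors := by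
    ext p
    simp only [Finset.mem_union, ← Nat.support_factorization, hfac,
      Finsupp.mem_support_iff, Finsupp.sup_apply, ne_eq]
    omega
  rw [ppf, hsupp]
  have key : ∀ p ∈ a.primeFactors ∪ b.primeFactors,
      p ^ (Nat.lcm a b).factorization p ≤
        (if p ∈ a.primeFactors then p ^ a.factorization p else 0) +
        (if p ∈ b.primeFactors then p ^ b.factorization p else 0) := by
    intro p hp
    have hfp : (Nat.lcm a b).factorization p =
        max (a.factorization p) (b.factorization p) := by
      rw [hfac]; rfl
    have hA : p ∈ a.primeFactors ↔ a.factorization p ≠ 0 := by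
      rw [← Nat.support_factorization, Finsupp.mem_support_iff]
    have hB : p ∈ b.primeFactors ↔ b.factorization p ≠ 0 := by
      rw [← Nat.support_factorization, Finsupp.mem_support_iff]
    rcases le_total (a.factorization p) (b.factorization p) with hle | hle
    · have : (Nat.lcm a b).factorization p = b.factorization p := by omega
      rw [this]
      have hpb : p ∈ b.primeFactors := by
        rw [hB]
        rcases Finset.mem_union.mp hp with h | h
        · have := hA.mp h; omega
        · exact hB.mp h
      simp [hpb]
    · have : (Nat.lcm a b).factorization p = a.factorization p := by omega
      rw [this]
      have hpa : p ∈ a.primeFactors := by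
        rw [hA]
        rcases Finset.mem_union.mp hp with h | h
        · exact hA.mp h
        · have := hB.mp h; omega
      simp [hpa]
  calc ∑ p ∈ a.primeFactors ∪ b.primeFactors, p ^ (Nat.lcm a b).factorization p
      ≤ ∑ p ∈ a.primeFactors ∪ b.primeFactors,
        ((if p ∈ a.primeFactors then p ^ a.factorization p else 0) +
         (if p ∈ b.primeFactors then p ^ b.factorization p else 0)) :=
        Finset.sum_le_sum key
    _ = (∑ p ∈ (a.primeFactors ∪ b.primeFactors) ∩ a.primeFactors, p ^ a.factorization p)
        + (∑ p ∈ (a.primeFactors ∪ b.primeFactors) ∩ b.primeFactors, p ^ b.factorization p) := by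
        rw [Finset.sum_add_distrib, Finset.sum_ite_mem, Finset.sum_ite_mem]
    _ = ppf a + ppf b := by
        rw [Finset.union_inter_cancel_left, Finset.union_inter_cancel_right]; rfl

lemma pow_le_ppf {p a k : ℕ} (hp : p.Prime) (hk : k ≠ 0) (ha : 1 ≤ a) (hdvd : p ^ a ∣ k) :
    p ^ a ≤ ppf k := by
  have hv : a ≤ k.factorization p := (hp.pow_dvd_iff_le_factorization hk).mp hdvd
  have hmem : p ∈ k.primeFactors := Nat.mem_primeFactors.mpr
    ⟨hp, dvd_trans (dvd_trans (dvd_pow_self p (by omega)) hdvd) dvd_rfl, hk⟩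
  calc p ^ a ≤ p ^ k.factorization p := Nat.pow_le_pow_right hp.pos (by omega)
  _ ≤ ppf k := by rw [ppf]; exact Finset.single_le_sum (f := fun p => p ^ k.factorization p) (fun i _ => Nat.zero_le _) hmem

lemma pow_add_pow_le_ppf {p q a b k : ℕ} (hp : p.Prime) (hq : q.Prime) (hpq : p ≠ q)
    (hk : k ≠ 0) (ha : 1 ≤ a) (hb : 1 ≤ b) (hpa : p ^ a ∣ k) (hqb : q ^ b ∣ k) :
    p ^ a + q ^ b ≤ ppf k := by
  have hva : a ≤ k.factorization p := (hp.pow_dvd_iff_le_factorization hk).mp hpa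
  have hvb : b ≤ k.factorization q := (hq.pow_dvd_iff_le_factorization hk).mp hqb
  have hmp : p ∈ k.primeFactors := Nat.mem_primeFactors.mpr
    ⟨hp, dvd_trans (dvd_pow_self p (by omega)) hpa, hk⟩
  have hmq : q ∈ k.primeFactors := Nat.mem_primeFactors.mpr
    ⟨hq, dvd_trans (dvd_pow_self q (by omega)) hqb, hk⟩
  have hsub : ({p, q} : Finset ℕ) ⊆ k.primeFactors := by
    intro x hx
    rcases Finset.mem_insert.mp hx with rfl | hx
    · exact hmp
    · rw [Finset.mem_singleton.mp hx]; exact hmq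
  calc p ^ a + q ^ b ≤ p ^ k.factorization p + q ^ k.factorization q := by
        have := Nat.pow_le_pow_right hp.pos hva
        have := Nat.pow_le_pow_right hq.pos hvb
        omega
  _ = ∑ x ∈ ({p, q} : Finset ℕ), x ^ k.factorization x := by rw [Finset.sum_pair hpq]
  _ ≤ ppf k := by rw [ppf]; exact Finset.sum_le_sum_of_subset hsub

lemma ppf_prime_mul {q t : ℕ} (hq : q.Prime) (ht : t ≠ 0) (hqt : ¬ q ∣ t) :
    ppf (q * t) = q + ppf t := by
  have hq0 : q ≠ 0 := hq.pos.ne'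
  have hfac : (q * t).factorization = q.factorization + t.factorization :=
    Nat.factorization_mul hq0 ht
  have hsupp : (q * t).primeFactors = insert q t.primeFactors := by
    rw [Nat.primeFactors_mul hq0 ht, Nat.Prime.primeFactors hq]
    rfl
  have hqnot : q ∉ t.primeFactors := fun h => hqt (Nat.dvd_of_mem_primeFactors h)
  rw [ppf, hsupp, Finset.sum_insert hqnot]
  congr 1
  · have : (q * t).factorization q = 1 := by
      rw [hfac]
      simp only [Finsupp.add_apply, hq.factorization, Finsupp.single_eq_same]
      have : t.factorization q = 0 := Nat.factorization_eq_zero_of_not_dvd hqt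
      omega
    rw [this, pow_one]
  · apply Finset.sum_congr rfl
    intro p hp
    have hpq : p ≠ q := fun h => hqnot (h ▸ hp)
    congr 1
    rw [hfac]
    simp only [Finsupp.add_apply, hq.factorization]
    rw [Finsupp.single_eq_of_ne hpq]
    omega

lemma ppf_prime {q : ℕ} (hq : q.Prime) : ppf q = q := by
  have := ppf_prime_mul hq one_ne_zero (by simpa using hq.one_lt.ne')
  simpa [ppf_one] using this

lemma ppf_prime_pow {p a : ℕ} (hp : p.Prime) (ha : 1 ≤ a) : ppf (p ^ a) = p ^ a := by
  rw [ppf, Nat.primeFactors_pow p (by omega), hp.primeFactors, hp.factorization_pow]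
  simp

lemma multiset_lcm_pos_and_ppf_le (M : Multiset ℕ) (h : ∀ c ∈ M, 1 ≤ c) :
    M.lcm ≠ 0 ∧ ppf M.lcm ≤ M.sum := by
  induction M using Multiset.induction_on with
  | empty => simp [Multiset.lcm_zero, ppf_one]
  | cons a M ih =>
    have ha : 1 ≤ a := h a (Multiset.mem_cons_self a M)
    obtain ⟨hM0, hMle⟩ := ih (fun c hc => h c (Multiset.mem_cons_of_mem hc))
    rw [Multiset.lcm_cons]
    constructor
    · exact Nat.lcm_ne_zero (by omega) hM0
    · calc ppf (Nat.lcm a M.lcm) ≤ ppf a + ppf M.lcm := ppf_lcm_le (by omega) hM0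
      _ ≤ a + M.sum := by
          have h2 := ppf_le_self (k := a) (by omega : a ≠ 0)
          omega
      _ = (a ::ₘ M).sum := by rw [Multiset.sum_cons]

lemma ppf_orderOf_le {n : ℕ} (τ : Equiv.Perm (Fin n)) : ppf (orderOf τ) ≤ n := by
  have h1 : τ.cycleType.lcm = orderOf τ := Equiv.Perm.lcm_cycleType τ
  have h2 : τ.cycleType.sum ≤ n := by
    rw [Equiv.Perm.sum_cycleType]
    calc τ.support.card ≤ Fintype.card (Fin n) := τ.support.card_le_univ
    _ = n := Fintype.card_fin n
  have h3 := multiset_lcm_pos_and_ppf_le τ.cycleType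
    (fun c hc => by have := Equiv.Perm.two_le_of_mem_cycleType hc; omega)
  rw [h1] at h3
  omega

lemma exists_perm_orderOf {n k : ℕ} (hk : k ≠ 0) (hppf : ppf k ≤ n) :
    ∃ τ : Equiv.Perm (Fin n), orderOf τ = k := by
  set M : Multiset ℕ := k.primeFactors.val.map (fun p => p ^ k.factorization p) with hM
  have hmem : ∀ c ∈ M, ∃ p ∈ k.primeFactors, c = p ^ k.factorization p := by
    intro c hc
    obtain ⟨p, hp, rfl⟩ := Multiset.mem_map.mp hc
    exact ⟨p, hp, rfl⟩
  have h2le : ∀ c ∈ M, 2 ≤ c := by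
    intro c hc
    obtain ⟨p, hp, rfl⟩ := hmem c hc
    have hpp := Nat.prime_of_mem_primeFactors hp
    have hv : 1 ≤ k.factorization p :=
      hpp.factorization_pos_of_dvd hk (Nat.dvd_of_mem_primeFactors hp)
    calc 2 ≤ p := hpp.two_le
    _ = p ^ 1 := (pow_one p).symm
    _ ≤ p ^ k.factorization p := Nat.pow_le_pow_right hpp.pos hv
  have hsum : M.sum = ppf k := rfl
  obtain ⟨g, hg⟩ := (Equiv.Perm.exists_with_cycleType_iff (Fin n)).mpr
    ⟨by rw [hsum, Fintype.card_fin]; exact hppf, h2le⟩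
  refine ⟨g, ?_⟩
  have hlcm : M.lcm ≠ 0 ∧ ppf M.lcm ≤ M.sum :=
    multiset_lcm_pos_and_ppf_le M (fun c hc => by have := h2le c hc; omega)
  have horder : orderOf g = M.lcm := by rw [← Equiv.Perm.lcm_cycleType, hg]
  rw [horder]
  apply Nat.dvd_antisymm
  · apply Multiset.lcm_dvd.mpr
    intro c hc
    obtain ⟨p, hp, rfl⟩ := hmem c hc
    exact Nat.ordProj_dvd k p
  · rw [← Nat.factorization_le_iff_dvd hk hlcm.1]
    intro p
    by_cases hp : p ∈ k.primeFactors
    · have hpp := Nat.prime_of_mem_primeFactors hp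
      have hdvd : p ^ k.factorization p ∣ M.lcm := by
        apply Multiset.dvd_lcm
        rw [hM]
        exact Multiset.mem_map.mpr ⟨p, hp, rfl⟩
      exact (hpp.pow_dvd_iff_le_factorization hlcm.1).mp hdvd
    · have : k.factorization p = 0 := by
        rwa [← Nat.support_factorization, Finsupp.mem_support_iff, not_not] at hp
      simp [this]

lemma four_le_ppf_of_even {m : ℕ} (hm : 3 ≤ m) (h2 : 2 ∣ m) : 4 ≤ ppf m := by
  have hm0 : m ≠ 0 := by omega
  by_cases h4 : 4 ∣ m
  · have : (4:ℕ) = 2 ^ 2 := by norm_num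
    calc (4:ℕ) = 2 ^ 2 := this
    _ ≤ ppf m := pow_le_ppf Nat.prime_two hm0 (by omega) (by rwa [← this])
  · -- m = 2 * t with t odd, t ≥ 3
    obtain ⟨t, rfl⟩ := h2
    have ht0 : t ≠ 0 := by omega
    have htodd : ¬ 2 ∣ t := fun ⟨s, hs⟩ => h4 ⟨s, by omega⟩
    have ht3 : 3 ≤ t := by
      rcases Nat.lt_or_ge t 3 with h | h
      · interval_cases t <;> simp_all
      · exact h
    have hp := Nat.minFac_prime (n := t) (by omega)
    have hpdvd : t.minFac ∣ 2 * t := Dvd.dvd.mul_left (Nat.minFac_dvd t) 2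
    have hpne2 : t.minFac ≠ 2 := fun h => htodd (h ▸ Nat.minFac_dvd t)
    have hp3 : 3 ≤ t.minFac := by
      have := hp.two_le
      omega
    have h1 := pow_add_pow_le_ppf Nat.prime_two hp (by omega) hm0 (le_refl 1) (le_refl 1)
      (by simpa using h2) (by simpa using hpdvd)
    rw [pow_one, pow_one] at h1
    omega

lemma three_le_ppf {m : ℕ} (hm : 3 ≤ m) : 3 ≤ ppf m := by
  by_cases h2 : 2 ∣ m
  · have := four_le_ppf_of_even hm h2
    omega
  · have hp := Nat.minFac_prime (n := m) (by omega)
    have hpne2 : m.minFac ≠ 2 := fun h => h2 (h ▸ Nat.minFac_dvd m)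
    have h1 := pow_le_ppf (k := m) hp (by omega) (le_refl 1) (by simpa using Nat.minFac_dvd m)
    rw [pow_one] at h1
    have h2 := hp.two_le
    omega

set_option maxRecDepth 10000 in
lemma richert_base_dec : ∀ s ∈ Finset.Icc 10 32,
    ∃ F ∈ ({3,5,7,11,13,17,19} : Finset ℕ).powerset, F.sum id = s := by decide

lemma richert_base : ∀ s : ℕ, 10 ≤ s → s ≤ 32 →
    ∃ F : Finset ℕ, (∀ p ∈ F, p.Prime ∧ p ≠ 2 ∧ p < 23) ∧ F.sum id = s := by
  intro s h1 h2
  obtain ⟨F, hF, hsum⟩ := richert_base_dec s (Finset.mem_Icc.mpr ⟨h1, h2⟩)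
  refine ⟨F, ?_, hsum⟩
  intro p hp
  have hp7 : p ∈ ({3,5,7,11,13,17,19} : Finset ℕ) := Finset.mem_powerset.mp hF hp
  fin_cases hp7 <;> norm_num

lemma richert_aux : ∀ q : ℕ, q.Prime → 23 ≤ q → ∀ s, 9 < s → s ≤ 9 + q →
    ∃ F : Finset ℕ, (∀ p ∈ F, p.Prime ∧ p ≠ 2 ∧ p < q) ∧ F.sum id = s := by
  intro q
  induction q using Nat.strong_induction_on with
  | _ q ih =>
    intro hq hq23 s hs9 hsq
    by_cases hq' : q = 23
    · subst hq'
      obtain ⟨F, hF, hsum⟩ := richert_base s (by omega) (by omega)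
      exact ⟨F, hF, hsum⟩
    · have hq23' : 23 < q := lt_of_le_of_ne hq23 (Ne.symm hq')
      set T := (Finset.range q).filter Nat.Prime with hT
      have h23T : 23 ∈ T := Finset.mem_filter.mpr ⟨Finset.mem_range.mpr hq23', by norm_num⟩
      have hTne : T.Nonempty := ⟨23, h23T⟩
      set r := T.max' hTne with hr
      have hrT : r ∈ T := T.max'_mem hTne
      have hrprime : r.Prime := (Finset.mem_filter.mp hrT).2
      have hrq : r < q := Finset.mem_range.mp (Finset.mem_filter.mp hrT).1
      have hr23 : 23 ≤ r := T.le_max' 23 h23T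
      have hrmax : ∀ p, p.Prime → p < q → p ≤ r := fun p hp hpq =>
        T.le_max' p (Finset.mem_filter.mpr ⟨Finset.mem_range.mpr hpq, hp⟩)
      have hq2r : q ≤ 2 * r := by
        obtain ⟨p, hpp, hrp, hp2r⟩ := Nat.exists_prime_lt_and_le_two_mul r (by omega)
        by_contra hcon
        push_neg at hcon
        have hlt : p < q := by omega
        have := hrmax p hpp hlt
        omega
      by_cases hcase : s ≤ 9 + r
      · obtain ⟨F, hF, hsum⟩ := ih r hrq hrprime hr23 s hs9 hcase
        exact ⟨F, fun p hp => ⟨(hF p hp).1, (hF p hp).2.1, by have := (hF p hp).2.2; omega⟩, hsum⟩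
      · obtain ⟨F, hF, hsum⟩ := ih r hrq hrprime hr23 (s - r) (by omega) (by omega)
        have hrF : r ∉ F := fun h => by have := (hF r h).2.2; omega
        refine ⟨insert r F, ?_, ?_⟩
        · intro p hp
          rcases Finset.mem_insert.mp hp with rfl | hp
          · exact ⟨hrprime, by omega, hrq⟩
          · exact ⟨(hF p hp).1, (hF p hp).2.1, by have := (hF p hp).2.2; omega⟩
        · rw [Finset.sum_insert hrF, hsum]
          simp only [id_eq]
          omega

lemma richert (s : ℕ) (h3 : 3 ≤ s) (h4 : s ≠ 4) (h6 : s ≠ 6) (h9 : s ≠ 9) :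
    ∃ F : Finset ℕ, (∀ p ∈ F, p.Prime ∧ p ≠ 2) ∧ F.sum id = s := by
  by_cases hle : s ≤ 9
  · interval_cases s
    · exact ⟨{3}, by norm_num, by norm_num⟩
    · exact absurd rfl h4
    · exact ⟨{5}, by norm_num, by norm_num⟩
    · exact absurd rfl h6
    · exact ⟨{7}, by norm_num, by norm_num⟩
    · exact ⟨{3,5}, by norm_num, by norm_num⟩
    · exact absurd rfl h9
  · push_neg at hle
    obtain ⟨q, hq1, hq2⟩ := Nat.exists_infinite_primes (max 23 (s - 9))
    obtain ⟨F, hF, hsum⟩ := richert_aux q hq2 (le_trans (le_max_left _ _) hq1)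
      s (by omega) (by have := le_trans (le_max_right _ _) hq1; omega)
    exact ⟨F, fun p hp => ⟨(hF p hp).1, (hF p hp).2.1⟩, hsum⟩

lemma ppf_prod_primes : ∀ F : Finset ℕ, (∀ p ∈ F, p.Prime) →
    (∏ p ∈ F, p) ≠ 0 ∧ ppf (∏ p ∈ F, p) = F.sum id ∧
      (∀ r : ℕ, r.Prime → r ∣ (∏ p ∈ F, p) → r ∈ F) := by
  intro F
  induction F using Finset.induction_on with
  | empty =>
    intro _
    refine ⟨by norm_num, by simpa using ppf_one, ?_⟩
    intro r hr hdvd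
    simp only [Finset.prod_empty, Nat.dvd_one] at hdvd
    exact absurd (hdvd ▸ hr) Nat.not_prime_one
  | @insert a F haF ih =>
    intro hprimes
    have hap : a.Prime := hprimes a (Finset.mem_insert_self a F)
    obtain ⟨h0, hppf, hdvd⟩ := ih (fun p hp => hprimes p (Finset.mem_insert_of_mem hp))
    have hnd : ¬ a ∣ ∏ p ∈ F, p := fun h => haF (hdvd a hap h)
    rw [Finset.prod_insert haF]
    refine ⟨Nat.mul_ne_zero hap.pos.ne' h0, ?_, ?_⟩
    · rw [ppf_prime_mul hap h0 hnd, hppf, Finset.sum_insert haF]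
      rfl
    · intro r hr hrd
      rcases (Nat.Prime.dvd_mul hr).mp hrd with h | h
      · exact Finset.mem_insert.mpr (Or.inl ((Nat.prime_dvd_prime_iff_eq hr hap).mp h))
      · exact Finset.mem_insert.mpr (Or.inr (hdvd r hr h))

lemma bertrand_half {n : ℕ} (hn : 2 ≤ n) : ∃ q, q.Prime ∧ q ≤ n ∧ n < 2 * q := by
  obtain ⟨p, hp, h1, h2⟩ := Nat.exists_prime_lt_and_le_two_mul (n / 2) (by omega)
  exact ⟨p, hp, by omega, by omega⟩

lemma nt_main : ∀ n : ℕ, ∀ m : ℕ, 3 ≤ m → ppf m ≤ n →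
    ∃ k, k ≠ 0 ∧ ppf k ≤ n ∧ k ≠ m ∧ n < ppf (Nat.lcm m k) := by
  intro n
  induction n using Nat.strong_induction_on with
  | _ n ih =>
    intro m hm3 hmn
    have hm0 : m ≠ 0 := by omega
    have hn3 : 3 ≤ n := le_trans (three_le_ppf hm3) hmn
    obtain ⟨q, hqp, hqn, hn2q⟩ := bertrand_half (n := n) (by omega)
    by_cases hqm : q ∣ m
    · -- case 1 : q ∣ m, take k = 2 ^ (log 2 n)
      have hqodd : q ≠ 2 := by
        rintro rfl
        have := four_le_ppf_of_even hm3 hqm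
        omega
      set b := Nat.log 2 n with hb
      have hb1 : 1 ≤ b := by
        rw [hb]
        exact (Nat.le_log_iff_pow_le (by norm_num) (by omega)).mpr (by omega)
      have h2bn : 2 ^ b ≤ n := Nat.pow_log_le_self 2 (by omega)
      have hn2b : n < 2 ^ (b + 1) := Nat.lt_pow_succ_log_self (by norm_num) n
      have h2b0 : (2:ℕ) ^ b ≠ 0 := by positivity
      refine ⟨2 ^ b, h2b0, by rwa [ppf_prime_pow Nat.prime_two hb1], ?_, ?_⟩
      · rintro rfl
        exact hqodd ((Nat.prime_dvd_prime_iff_eq hqp Nat.prime_two).mp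
          (hqp.dvd_of_dvd_pow hqm))
      · have hlcm0 : Nat.lcm m (2 ^ b) ≠ 0 := Nat.lcm_ne_zero hm0 h2b0
        have hq_lcm : q ∣ Nat.lcm m (2 ^ b) := dvd_trans hqm (Nat.dvd_lcm_left _ _)
        have h2b_lcm : 2 ^ b ∣ Nat.lcm m (2 ^ b) := Nat.dvd_lcm_right _ _
        have key := pow_add_pow_le_ppf hqp Nat.prime_two hqodd hlcm0 (le_refl 1) hb1
          (by simpa using hq_lcm) h2b_lcm
        rw [pow_one] at key
        have : 2 ^ (b + 1) = 2 * 2 ^ b := by ring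
        omega
    · by_cases hfit : n < ppf m + q
      · -- case 2 : k = q
        refine ⟨q, hqp.pos.ne', by rwa [ppf_prime hqp], ?_, ?_⟩
        · rintro rfl; exact hqm dvd_rfl
        · have hcop : Nat.Coprime m q :=
            ((hqp.coprime_iff_not_dvd).mpr hqm).symm
          rw [hcop.lcm_eq_mul, mul_comm, ppf_prime_mul hqp hm0 hqm]
          omega
      · -- case 3 : recurse
        push_neg at hfit
        have hn' : ppf m ≤ n - q := by omega
        obtain ⟨k', hk'0, hk'le, hk'ne, hk'lcm⟩ := ih (n - q) (by omega) m hm3 hn'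
        have hqk' : ¬ q ∣ k' := by
          intro h
          have := pow_le_ppf (k := k') hqp hk'0 (le_refl 1) (by simpa using h)
          rw [pow_one] at this
          omega
        have hlcmne : Nat.lcm m k' ≠ 0 := Nat.lcm_ne_zero hm0 hk'0
        have hqlcm : ¬ q ∣ Nat.lcm m k' := by
          intro h
          rcases (Nat.Prime.dvd_mul hqp).mp (h.trans (Nat.lcm_dvd_mul m k')) with h' | h'
          exacts [hqm h', hqk' h']
        refine ⟨q * k', Nat.mul_ne_zero hqp.pos.ne' hk'0, ?_, ?_, ?_⟩
        · rw [ppf_prime_mul hqp hk'0 hqk']; omega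
        · intro h; exact hqm (h ▸ Dvd.intro k' rfl)
        · have hlcm_eq : Nat.lcm m (q * k') = q * Nat.lcm m k' := by
            apply Nat.dvd_antisymm
            · exact Nat.lcm_dvd (dvd_mul_of_dvd_right (Nat.dvd_lcm_left m k') q)
                (mul_dvd_mul_left q (Nat.dvd_lcm_right m k'))
            · apply Nat.Coprime.mul_dvd_of_dvd_of_dvd
              · exact (hqp.coprime_iff_not_dvd).mpr hqlcm
              · exact dvd_trans (dvd_mul_right q k') (Nat.dvd_lcm_right _ _)
              · exact Nat.lcm_dvd (Nat.dvd_lcm_left _ _)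
                  (dvd_trans (dvd_mul_left k' q) (Nat.dvd_lcm_right _ _))
          rw [hlcm_eq, ppf_prime_mul hqp hlcmne hqlcm]
          omega

lemma nt_all {n m : ℕ} (hn : 4 ≤ n) (hm : 2 ≤ m) (hmn : ppf m ≤ n) :
    ∃ k, k ≠ 0 ∧ ppf k ≤ n ∧ k ≠ m ∧ n < ppf (Nat.lcm m k) := by
  rcases eq_or_lt_of_le hm with rfl | hm3
  · -- m = 2 : use Richert
    set s := if n = 4 ∨ n = 6 ∨ n = 9 then n - 1 else n with hs
    have hsfacts : 3 ≤ s ∧ s ≠ 4 ∧ s ≠ 6 ∧ s ≠ 9 ∧ n - 1 ≤ s ∧ s ≤ n := by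
      rw [hs]; split <;> omega
    obtain ⟨F, hF, hsum⟩ := richert s hsfacts.1 hsfacts.2.1 hsfacts.2.2.1 hsfacts.2.2.2.1
    obtain ⟨hk0, hkppf, hkdvd⟩ := ppf_prod_primes F (fun p hp => (hF p hp).1)
    set k := ∏ p ∈ F, p with hk
    have hppfk : ppf k = s := hkppf.trans hsum
    have h2k : ¬ 2 ∣ k := fun h => (hF 2 (hkdvd 2 Nat.prime_two h)).2 rfl
    have hk2 : k ≠ 2 := fun h => h2k (h ▸ dvd_rfl)
    refine ⟨k, hk0, by omega, hk2, ?_⟩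
    have hlcm : Nat.lcm 2 k = 2 * k :=
      Nat.Coprime.lcm_eq_mul ((Nat.prime_two.coprime_iff_not_dvd).mpr h2k)
    rw [hlcm, ppf_prime_mul Nat.prime_two hk0 h2k]
    omega
  · exact nt_main n m hm3 hmn

/-- For `n ≥ 4`, the identity is the only dominant vertex of the order super commuting
graph of the symmetric group `S_n`. -/
theorem isDominantVertex_orderSuper_commutingGraph_symmetricGroup_iff
    (n : ℕ) (hn : 4 ≤ n) (σ : Equiv.Perm (Fin n)) :
    IsDominantVertex (orderSuper (Equiv.Perm (Fin n))
      (commutingGraph (Equiv.Perm (Fin n)))) σ ↔ σ = 1 := by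
  constructor
  · intro hdom
    by_contra hσ1
    have hm2 : 2 ≤ orderOf σ := by
      have h1 : orderOf σ ≠ 1 := fun h => hσ1 (orderOf_eq_one_iff.mp h)
      have h0 : orderOf σ ≠ 0 := (orderOf_pos σ).ne'
      omega
    obtain ⟨k, hk0, hkle, hkne, hklcm⟩ := nt_all hn hm2 (ppf_orderOf_le σ)
    obtain ⟨τ, hτ⟩ := exists_perm_orderOf hk0 hkle
    have hτσ : τ ≠ σ := fun h => hkne (by rw [← hτ, h])
    have hadj := hdom τ hτσ
    rw [orderSuper, SimpleGraph.fromRel_adj] at hadj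
    obtain ⟨hne, hrel⟩ := hadj
    have hcontra : ∀ x' y' : Equiv.Perm (Fin n),
        Commute x' y' → n < ppf (Nat.lcm (orderOf x') (orderOf y')) → False := by
      intro x' y' hc hgt
      obtain ⟨z, -, hz⟩ := Commute.exists_orderOf_eq_lcm _ hc
      have hle := ppf_orderOf_le z
      rw [hz] at hle
      omega
    rcases hrel with h | h
    · rcases h with h | ⟨x', y', hx', hy', hadj'⟩
      · rw [hτ] at h
        exact hkne h.symm
      · rw [commutingGraph, SimpleGraph.fromRel_adj] at hadj'
        have hc : Commute x' y' := by
          rcases hadj'.2 with h' | h'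
          exacts [h', h'.symm]
        apply hcontra x' y' hc
        rw [hx', hy', hτ, Nat.lcm_comm]
        rwa [Nat.lcm_comm]
    · rcases h with h | ⟨x', y', hx', hy', hadj'⟩
      · rw [hτ] at h
        exact hkne h
      · rw [commutingGraph, SimpleGraph.fromRel_adj] at hadj'
        have hc : Commute x' y' := by
          rcases hadj'.2 with h' | h'
          exacts [h', h'.symm]
        apply hcontra x' y' hc
        rw [hx', hy', hτ, Nat.lcm_comm]
        exact hklcm
  · rintro rfl
    intro w hw
    rw [orderSuper, SimpleGraph.fromRel_adj]
    refine ⟨Ne.symm hw, Or.inl (Or.inr ⟨1, w, rfl, rfl, ?_⟩)⟩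
    rw [commutingGraph, SimpleGraph.fromRel_adj]
    exact ⟨Ne.symm hw, Or.inl (by group)⟩
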